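/- There exists an absolute constant δ₀ > 0 such that the following holds. Let d, n, m ≥ 1 be integers, T > 0 a real number, ε > 0, and 0 < δ ≤ min(ε², δ₀). Suppose M assigns to each dataset X = (X_{i,j})_{i∈[n], j∈[m]} of points X_{i,j} ∈ ℝ^d a Borel probability measure M(X) on ℝ^d, and M is (ε,δ) user-level differentially private. Suppose further that for every b ∈ ℝ^d, letting X_b be the dataset with X_{i,j} = b for all i, j, one has M(X_b)({y ∈ ℝ^d : ‖y − b‖₂ ≤ T}) ≥ 2/3. Then n > (1/(3ε))·log(1/δ). -/

import Mathlib

open MeasureTheory Metric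
open scoped ENNReal

private lemma num_aux {L : ℝ} (hL : 100 ≤ L) : L < 2 * Real.exp (L / 6) := by
  have h1 : L / 12 + 1 ≤ Real.exp (L / 12) := Real.add_one_le_exp _
  have h2 : Real.exp (L / 6) = Real.exp (L / 12) * Real.exp (L / 12) := by
    rw [← Real.exp_add]; ring_nf
  nlinarith [Real.exp_pos (L / 12)]

set_option maxHeartbeats 1000000 in
/-- Lower bound on the number of users: any `(ε,δ)` user-level differentially private
mechanism over `n` users with `m` samples each in `ℝ^d` that, on every constant dataset
with common value `b`, outputs a point within `T` of `b` with probability at least `2/3`,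
must have `n > (1/(3ε))·log(1/δ)`, provided `δ ≤ ε²` (and `δ` is at most an absolute
constant `δ₀`). -/
theorem stmt_11 :
    ∃ δ₀ : ℝ, 0 < δ₀ ∧
      ∀ (d n m : ℕ), 1 ≤ d → 1 ≤ n → 1 ≤ m →
      ∀ T ε δ : ℝ, 0 < T → 0 < ε → 0 < δ → δ ≤ min (ε ^ 2) δ₀ →
      ∀ M : (Fin n → Fin m → EuclideanSpace ℝ (Fin d)) →
          Measure (EuclideanSpace ℝ (Fin d)),
        (∀ X, IsProbabilityMeasure (M X)) →
        (∀ X X' : Fin n → Fin m → EuclideanSpace ℝ (Fin d),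
          (∃ i₀, ∀ i, i ≠ i₀ → X i = X' i) →
          ∀ S : Set (EuclideanSpace ℝ (Fin d)), MeasurableSet S →
            M X S ≤ ENNReal.ofReal (Real.exp ε) * M X' S + ENNReal.ofReal δ) →
        (∀ b : EuclideanSpace ℝ (Fin d),
          (2 / 3 : ℝ≥0∞) ≤ M (fun _ _ => b) (closedBall b T)) →
        (1 / (3 * ε)) * Real.log (1 / δ) < (n : ℝ) := by
  refine ⟨Real.exp (-100), Real.exp_pos _, ?_⟩
  intro d n m hd hn hm T ε δ hT hε hδ hδle M hprob hdp hacc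
  by_contra hcon
  push_neg at hcon
  have hδε : δ ≤ ε ^ 2 := (le_min_iff.mp hδle).1
  have hδ0 : δ ≤ Real.exp (-100) := (le_min_iff.mp hδle).2
  -- group privacy
  have key : ∀ (b b' : EuclideanSpace ℝ (Fin d)) (S : Set (EuclideanSpace ℝ (Fin d))),
      MeasurableSet S →
      M (fun _ _ => b') S ≤ ENNReal.ofReal (Real.exp ((n : ℝ) * ε)) * M (fun _ _ => b) S
        + (n : ℝ≥0∞) * ENNReal.ofReal (δ * Real.exp ((n : ℝ) * ε)) := by
    intro b b' S hS
    set Y : ℕ → (Fin n → Fin m → EuclideanSpace ℝ (Fin d)) :=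
      fun k i _ => if (i : ℕ) < k then b' else b with hY
    have hY0 : Y 0 = fun _ _ => b := by funext i j; simp [Y]
    have hYn : Y n = fun _ _ => b' := by funext i j; simp [Y, i.isLt]
    have main : ∀ k, k ≤ n → M (Y k) S ≤ ENNReal.ofReal (Real.exp ((k : ℝ) * ε)) * M (Y 0) S
        + (k : ℝ≥0∞) * ENNReal.ofReal (δ * Real.exp ((k : ℝ) * ε)) := by
      intro k
      induction k with
      | zero => intro _; simp
      | succ k ih =>
        intro hk1
        have hk : k < n := Nat.lt_of_succ_le hk1
        have hadj : ∃ i₀, ∀ i, i ≠ i₀ → Y (k + 1) i = Y k i := by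
          refine ⟨⟨k, hk⟩, fun i hi => ?_⟩
          funext j
          have hik : (i : ℕ) ≠ k := fun h => hi (Fin.ext h)
          simp only [Y]
          rcases lt_or_gt_of_ne hik with h | h
          · rw [if_pos (by omega), if_pos (by omega)]
          · rw [if_neg (by omega), if_neg (by omega)]
        have step := hdp (Y (k + 1)) (Y k) hadj S hS
        have ihk := ih (Nat.le_of_succ_le hk1)
        have hmul : ENNReal.ofReal (Real.exp ε) * ENNReal.ofReal (Real.exp ((k : ℝ) * ε))
            = ENNReal.ofReal (Real.exp (((k : ℕ) + 1 : ℝ) * ε)) := by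
          rw [← ENNReal.ofReal_mul (Real.exp_nonneg _),
            show (((k : ℕ) + 1 : ℝ) * ε) = ε + (k : ℝ) * ε by ring, Real.exp_add]
        have hδmul : ENNReal.ofReal (Real.exp ε) * ENNReal.ofReal (δ * Real.exp ((k : ℝ) * ε))
            = ENNReal.ofReal (δ * Real.exp (((k : ℕ) + 1 : ℝ) * ε)) := by
          rw [← ENNReal.ofReal_mul (Real.exp_nonneg _),
            show (((k : ℕ) + 1 : ℝ) * ε) = ε + (k : ℝ) * ε by ring, Real.exp_add]
          ring
        have hδle' : ENNReal.ofReal δ ≤ ENNReal.ofReal (δ * Real.exp (((k : ℕ) + 1 : ℝ) * ε)) := by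
          apply ENNReal.ofReal_le_ofReal
          nlinarith [Real.one_le_exp (by positivity : (0:ℝ) ≤ ((k : ℕ) + 1 : ℝ) * ε)]
        calc M (Y (k + 1)) S
            ≤ ENNReal.ofReal (Real.exp ε) * M (Y k) S + ENNReal.ofReal δ := step
          _ ≤ ENNReal.ofReal (Real.exp ε) *
                (ENNReal.ofReal (Real.exp ((k : ℝ) * ε)) * M (Y 0) S
                  + (k : ℝ≥0∞) * ENNReal.ofReal (δ * Real.exp ((k : ℝ) * ε)))
                + ENNReal.ofReal δ := by gcongr
          _ = ENNReal.ofReal (Real.exp (((k : ℕ) + 1 : ℝ) * ε)) * M (Y 0) S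
                + (k : ℝ≥0∞) * ENNReal.ofReal (δ * Real.exp (((k : ℕ) + 1 : ℝ) * ε))
                + ENNReal.ofReal δ := by
              rw [mul_add, ← mul_assoc, hmul, mul_left_comm, hδmul]
          _ ≤ ENNReal.ofReal (Real.exp (((k : ℕ) + 1 : ℝ) * ε)) * M (Y 0) S
                + (k : ℝ≥0∞) * ENNReal.ofReal (δ * Real.exp (((k : ℕ) + 1 : ℝ) * ε))
                + 1 * ENNReal.ofReal (δ * Real.exp (((k : ℕ) + 1 : ℝ) * ε)) := by
              rw [one_mul]; gcongr
          _ = ENNReal.ofReal (Real.exp (((k : ℕ) + 1 : ℝ) * ε)) * M (Y 0) S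
                + ((k : ℕ) + 1 : ℝ≥0∞) * ENNReal.ofReal (δ * Real.exp (((k : ℕ) + 1 : ℝ) * ε)) := by
              rw [add_assoc, ← add_mul]
          _ = _ := by push_cast; ring_nf
    have := main n le_rfl
    rwa [hYn, hY0] at this
  -- setup geometry
  have hi0 : (0 : ℕ) < d := hd
  set i0 : Fin d := ⟨0, hi0⟩
  set ctr : ℕ → EuclideanSpace ℝ (Fin d) := fun k => EuclideanSpace.single i0 (3 * T * k) with hctr
  set B : ℕ → Set (EuclideanSpace ℝ (Fin d)) := fun k => closedBall (ctr k) T with hB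
  set X₀ : Fin n → Fin m → EuclideanSpace ℝ (Fin d) := fun _ _ => ctr 0 with hX₀
  haveI := hprob X₀
  set x : ℕ → ℝ := fun k => (M X₀ (B k)).toReal with hx
  set E : ℝ := Real.exp ((n : ℝ) * ε) with hE
  have hEpos : 0 < E := Real.exp_pos _
  -- per-ball real lower bound
  set c : ℝ := (2 / 3 - (n : ℝ) * (δ * E)) / E with hc
  have hxk : ∀ k, c ≤ x k := by
    intro k
    have h1 : (2 / 3 : ℝ≥0∞) ≤ M (fun _ _ => ctr k) (B k) := hacc (ctr k)
    have h2 := key (ctr 0) (ctr k) (B k) measurableSet_closedBall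
    have h3 : (2 / 3 : ℝ≥0∞) ≤ ENNReal.ofReal E * M X₀ (B k)
        + (n : ℝ≥0∞) * ENNReal.ofReal (δ * E) := le_trans h1 h2
    have hfin : M X₀ (B k) ≠ ∞ := measure_ne_top _ _
    have h4 : ((2 / 3 : ℝ≥0∞)).toReal ≤ (ENNReal.ofReal E * M X₀ (B k)
        + (n : ℝ≥0∞) * ENNReal.ofReal (δ * E)).toReal := by
      apply ENNReal.toReal_mono _ h3
      exact ENNReal.add_ne_top.mpr ⟨ENNReal.mul_ne_top ENNReal.ofReal_ne_top hfin,
        ENNReal.mul_ne_top (ENNReal.natCast_ne_top n) ENNReal.ofReal_ne_top⟩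
    have h5 : (2 / 3 : ℝ) ≤ E * x k + (n : ℝ) * (δ * E) := by
      have hδE : (0:ℝ) ≤ δ * E := by positivity
      rw [ENNReal.toReal_add (ENNReal.mul_ne_top ENNReal.ofReal_ne_top hfin)
            (ENNReal.mul_ne_top (ENNReal.natCast_ne_top n) ENNReal.ofReal_ne_top),
          ENNReal.toReal_mul, ENNReal.toReal_mul, ENNReal.toReal_ofReal hEpos.le,
          ENNReal.toReal_ofReal hδE, ENNReal.toReal_natCast] at h4
      simpa using h4
    rw [hc, div_le_iff₀ hEpos]
    have hx0 : 0 ≤ x k := ENNReal.toReal_nonneg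
    nlinarith
  -- numerics: c > 0
  set L : ℝ := Real.log (1 / δ) with hL
  have hδ1 : δ < 1 := lt_of_le_of_lt hδ0 (by
    calc Real.exp (-100) < Real.exp 0 := Real.exp_lt_exp.mpr (by norm_num)
    _ = 1 := Real.exp_zero)
  have hLval : δ = Real.exp (-L) := by
    rw [hL, Real.log_div one_ne_zero (ne_of_gt hδ), Real.log_one]
    simp [Real.exp_log hδ]
  have hL100 : 100 ≤ L := by
    have h1 : Real.exp 100 ≤ 1 / δ := by
      rw [le_div_iff₀ hδ]
      calc Real.exp 100 * δ ≤ Real.exp 100 * Real.exp (-100) :=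
            mul_le_mul_of_nonneg_left hδ0 (Real.exp_pos _).le
        _ = 1 := by rw [← Real.exp_add]; norm_num
    calc (100 : ℝ) = Real.log (Real.exp 100) := (Real.log_exp _).symm
      _ ≤ L := (Real.log_le_log_iff (Real.exp_pos _) (by positivity)).mpr h1
  have hLpos : 0 < L := by linarith
  have hnε : (n : ℝ) * ε ≤ L / 3 := by
    have h := mul_le_mul_of_nonneg_right hcon hε.le
    have h2 : 1 / (3 * ε) * L * ε = L / 3 := by field_simp
    linarith
  have hsqrt : Real.sqrt δ ≤ ε := by
    calc Real.sqrt δ ≤ Real.sqrt (ε ^ 2) := Real.sqrt_le_sqrt hδε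
    _ = ε := by rw [Real.sqrt_sq hε.le]
  have hsqrtval : Real.sqrt δ = Real.exp (-(L / 2)) := by
    rw [hLval,
      show Real.exp (-L) = Real.exp (-(L/2)) * Real.exp (-(L/2)) by
        rw [← Real.exp_add]; ring_nf]
    exact Real.sqrt_mul_self (Real.exp_pos _).le
  have hsqrtpos : 0 < Real.sqrt δ := Real.sqrt_pos.mpr hδ
  have hnδ : (n : ℝ) * δ ≤ L / 3 * Real.sqrt δ := by
    have h1 : (n : ℝ) * δ ≤ 1 / (3 * ε) * L * δ := mul_le_mul_of_nonneg_right hcon hδ.le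
    have h2 : 1 / (3 * ε) * L * δ ≤ 1 / (3 * Real.sqrt δ) * L * δ := by
      apply mul_le_mul_of_nonneg_right _ hδ.le
      apply mul_le_mul_of_nonneg_right _ hLpos.le
      apply div_le_div_of_nonneg_left one_pos.le (by positivity) (by nlinarith)
    have h3 : 1 / (3 * Real.sqrt δ) * L * δ = L / 3 * Real.sqrt δ := by
      rw [show δ = Real.sqrt δ * Real.sqrt δ from (Real.mul_self_sqrt hδ.le).symm]
      field_simp
      rw [Real.sqrt_sq hsqrtpos.le]
    linarith
  have hEbound : E ≤ Real.exp (L / 3) := Real.exp_le_exp.mpr hnε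
  have hcpos : 0 < c := by
    rw [hc]
    apply div_pos _ hEpos
    have h1 : (n : ℝ) * (δ * E) = ((n : ℝ) * δ) * E := by ring
    have h2 : ((n : ℝ) * δ) * E ≤ (L / 3 * Real.sqrt δ) * Real.exp (L / 3) := by
      apply mul_le_mul hnδ hEbound hEpos.le (by positivity)
    have h3 : (L / 3 * Real.sqrt δ) * Real.exp (L / 3) = L / 3 * Real.exp (-(L / 6)) := by
      rw [hsqrtval, mul_assoc, ← Real.exp_add]
      ring_nf
    have h4 := num_aux hL100
    have h5 : L * Real.exp (-(L / 6)) < 2 := by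
      have hepos := Real.exp_pos (L / 6)
      have hinv : Real.exp (-(L / 6)) * Real.exp (L / 6) = 1 := by
        rw [← Real.exp_add]; simp
      nlinarith [Real.exp_pos (-(L / 6))]
    nlinarith
  -- disjointness and sum bound
  have hdisj : ∀ K : ℕ, (↑(Finset.range K) : Set ℕ).PairwiseDisjoint B := by
    intro K k _ l _ hkl
    apply closedBall_disjoint_closedBall
    have hne : ((k : ℤ)) ≠ (l : ℤ) := by exact_mod_cast hkl
    have h1 : (1 : ℤ) ≤ |(k : ℤ) - l| := Int.one_le_abs (sub_ne_zero.mpr hne)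
    have h1' : (1 : ℝ) ≤ |(k : ℝ) - l| := by
      exact_mod_cast h1
    have hdist : dist (ctr k) (ctr l) = 3 * T * |(k : ℝ) - l| := by
      rw [hctr]
      simp only [EuclideanSpace.dist_single_same]
      rw [Real.dist_eq, show 3 * T * (k:ℝ) - 3 * T * (l:ℝ) = 3 * T * ((k:ℝ) - l) by ring,
        abs_mul, abs_of_pos (by positivity : (0:ℝ) < 3 * T)]
    rw [hdist]
    nlinarith
  have hsumle : ∀ K : ℕ, ∑ k ∈ Finset.range K, x k ≤ 1 := by
    intro K
    have hsum : ∑ k ∈ Finset.range K, M X₀ (B k) ≤ 1 := by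
      rw [← measure_biUnion_finset (hdisj K) (fun k _ => measurableSet_closedBall)]
      exact prob_le_one
    have := ENNReal.toReal_mono ENNReal.one_ne_top hsum
    rwa [ENNReal.toReal_sum (fun k _ => measure_ne_top _ _), ENNReal.toReal_one] at this
  obtain ⟨K, hK⟩ := exists_nat_gt (1 / c)
  have hKc : (K : ℝ) * c ≤ 1 := by
    calc (K : ℝ) * c = ∑ _k ∈ Finset.range K, c := by
          rw [Finset.sum_const, Finset.card_range, nsmul_eq_mul]
      _ ≤ ∑ k ∈ Finset.range K, x k := Finset.sum_le_sum (fun k _ => hxk k)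
      _ ≤ 1 := hsumle K
  have : 1 < (K : ℝ) * c := by
    rw [div_lt_iff₀ hcpos] at hK
    linarith
  linarith
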